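/- Let G₁ be the contextuality scenario with vertex set {x₁,x₂,x₃} and edges {x₁,x₂}, {x₂,x₃}, {x₁,x₃}, and let H be a complex Hilbert space. (a) If (A₁,A₂,A₃) is a positive operator representation of G₁ on H, then A₁ = A₂ = A₃ = (1/2)·I_H. (b) If H ≠ {0}, then G₁ admits no projective representation on H: there are no orthogonal projections P₁,P₂,P₃ on H with P₁+P₂ = P₂+P₃ = P₁+P₃ = I_H. Consequently, no positive operator representation of G₁ on a nonzero Hilbert space dilates to a projective representation, so G₁ is not dilating. -/

import Mathlib

noncomputable section

structure HilbertC where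
  carrier : Type
  [normed : NormedAddCommGroup carrier]
  [ips : InnerProductSpace ℂ carrier]
  [complete : CompleteSpace carrier]

attribute [instance] HilbertC.normed HilbertC.ips HilbertC.complete

/-- A positive operator representation of the hypergraph with edge set `E`. -/
def IsPOR {V : Type} [Fintype V] (E : Finset (Finset V)) {H : Type}
    [NormedAddCommGroup H] [InnerProductSpace ℂ H] [CompleteSpace H]
    (A : V → H →L[ℂ] H) : Prop :=
  (∀ x, (A x).IsPositive) ∧ ∀ e ∈ E, ∑ x ∈ e, A x = 1

/-- A projective representation of the hypergraph with edge set `E`. -/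
def IsPR {V : Type} [Fintype V] (E : Finset (Finset V)) {H : Type}
    [NormedAddCommGroup H] [InnerProductSpace ℂ H] [CompleteSpace H]
    (A : V → H →L[ℂ] H) : Prop :=
  (∀ x, IsSelfAdjoint (A x) ∧ IsIdempotentElem (A x)) ∧ ∀ e ∈ E, ∑ x ∈ e, A x = 1

/-- The POR `A` dilates to a projective representation. -/
def DilatesToPR {V : Type} [Fintype V] (E : Finset (Finset V)) {H : Type}
    [NormedAddCommGroup H] [InnerProductSpace ℂ H] [CompleteSpace H]
    (A : V → H →L[ℂ] H) : Prop :=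
  ∃ (K : HilbertC) (B : V → K.carrier →L[ℂ] K.carrier) (Vi : H →L[ℂ] K.carrier),
    IsPR E B ∧ Isometry Vi ∧
    ∀ x, A x = (ContinuousLinearMap.adjoint Vi).comp ((B x).comp Vi)

/-- The hypergraph `(V, E)` is dilating. -/
def Dilating (V : Type) [Fintype V] (E : Finset (Finset V)) : Prop :=
  ∀ (H : HilbertC) (A : V → H.carrier →L[ℂ] H.carrier), IsPOR E A → DilatesToPR E A

/-- The contextuality scenario `G₁`: three vertices, edges `{x₁,x₂}`, `{x₂,x₃}`, `{x₁,x₃}`. -/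
def E1 : Finset (Finset (Fin 3)) := {{0, 1}, {1, 2}, {0, 2}}

lemma half_of_sums {H : Type} [NormedAddCommGroup H] [InnerProductSpace ℂ H] [CompleteSpace H]
    (A : Fin 3 → H →L[ℂ] H) (h : ∀ e ∈ E1, ∑ x ∈ e, A x = 1) :
    ∀ i, A i = (1 / 2 : ℂ) • (1 : H →L[ℂ] H) := by
  have h01 : A 0 + A 1 = 1 := by
    have := h {0, 1} (by simp [E1]); simpa [Finset.sum_insert, Finset.mem_singleton] using this
  have h12 : A 1 + A 2 = 1 := by
    have := h {1, 2} (by simp [E1]); simpa [Finset.sum_insert, Finset.mem_singleton] using this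
  have h02 : A 0 + A 2 = 1 := by
    have := h {0, 2} (by simp [E1]); simpa [Finset.sum_insert, Finset.mem_singleton] using this
  have e02 : A 0 = A 2 := by
    have : A 0 + A 1 = A 2 + A 1 := by rw [h01, add_comm, h12]
    exact add_right_cancel this
  have h00 : A 0 + A 0 = 1 := by nth_rewrite 2 [e02]; exact h02
  have key : ∀ i, A i + A i = 1 → A i = (1 / 2 : ℂ) • (1 : H →L[ℂ] H) := by
    intro i hi
    have : (2 : ℂ) • A i = 1 := by rw [two_smul]; exact hi
    calc A i = (1 / 2 : ℂ) • ((2 : ℂ) • A i) := by rw [smul_smul]; norm_num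
    _ = (1 / 2 : ℂ) • (1 : H →L[ℂ] H) := by rw [this]
  have a0 := key 0 h00
  have a1 : A 1 = (1 / 2 : ℂ) • (1 : H →L[ℂ] H) := by
    have : A 1 + A 1 = 1 := by
      have : A 1 = A 0 := by
        have : A 0 + A 1 = A 0 + A 0 := by rw [h01, h00]
        exact add_left_cancel this
      rw [this]; exact h00
    exact key 1 this
  have a2 : A 2 = (1 / 2 : ℂ) • (1 : H →L[ℂ] H) := by rw [← e02]; exact a0
  intro i; fin_cases i <;> assumption

lemma noPR {H : Type} [NormedAddCommGroup H] [InnerProductSpace ℂ H] [CompleteSpace H]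
    [Nontrivial H] : ¬ ∃ P : Fin 3 → H →L[ℂ] H, IsPR E1 P := by
  rintro ⟨P, hP⟩
  have h0 : P 0 = (1 / 2 : ℂ) • (1 : H →L[ℂ] H) := half_of_sums P hP.2 0
  have hidem : IsIdempotentElem (P 0) := (hP.1 0).2
  rw [h0] at hidem
  unfold IsIdempotentElem at hidem
  have heq : ((1 / 4 : ℂ)) • (1 : H →L[ℂ] H) = (1 / 2 : ℂ) • (1 : H →L[ℂ] H) := by
    calc ((1 / 4 : ℂ)) • (1 : H →L[ℂ] H)
        = ((1 / 2 : ℂ) • (1 : H →L[ℂ] H)) * ((1 / 2 : ℂ) • (1 : H →L[ℂ] H)) := by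
          rw [smul_mul_smul_comm]; norm_num
      _ = (1 / 2 : ℂ) • (1 : H →L[ℂ] H) := hidem
  obtain ⟨x, hx⟩ := exists_ne (0 : H)
  have := congrArg (fun T : H →L[ℂ] H => T x) heq
  simp only [ContinuousLinearMap.smul_apply, ContinuousLinearMap.one_apply] at this
  have : ((1 / 4 : ℂ) - (1 / 2 : ℂ)) • x = 0 := by rw [sub_smul, this, sub_self]
  have hc : ((1 / 4 : ℂ) - (1 / 2 : ℂ)) ≠ 0 := by norm_num
  exact hx ((smul_eq_zero.mp this).resolve_left hc)

theorem stmt11 (H : Type) [NormedAddCommGroup H] [InnerProductSpace ℂ H] [CompleteSpace H] :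
    (∀ A : Fin 3 → H →L[ℂ] H, IsPOR E1 A →
      ∀ i, A i = (1 / 2 : ℂ) • (1 : H →L[ℂ] H)) ∧
    (Nontrivial H → ¬ ∃ P : Fin 3 → H →L[ℂ] H, IsPR E1 P) ∧
    (Nontrivial H → ∀ A : Fin 3 → H →L[ℂ] H, IsPOR E1 A → ¬ DilatesToPR E1 A) ∧
    ¬ Dilating (Fin 3) E1 := by
  have part3 : ∀ (H' : Type) [NormedAddCommGroup H'] [InnerProductSpace ℂ H']
      [CompleteSpace H'], Nontrivial H' → ∀ A : Fin 3 → H' →L[ℂ] H',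
      IsPOR E1 A → ¬ DilatesToPR E1 A := by
    intro H' _ _ _ hnt A _ hdil
    obtain ⟨K, B, Vi, hPR, hIso, _⟩ := hdil
    obtain ⟨x, y, hxy⟩ := hnt
    have : Nontrivial K.carrier := ⟨Vi x, Vi y, fun h => hxy (hIso.injective h)⟩
    exact noPR ⟨B, hPR⟩
  refine ⟨fun A hA => half_of_sums A hA.2, fun hnt => noPR, fun hnt => part3 H hnt, ?_⟩
  intro hd
  set A : Fin 3 → ℂ →L[ℂ] ℂ := fun _ => (1 / 2 : ℂ) • (1 : ℂ →L[ℂ] ℂ) with hAdef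
  have hPOR : IsPOR E1 A := by
    constructor
    · intro i
      constructor
      · rw [← ContinuousLinearMap.isSelfAdjoint_iff_isSymmetric, IsSelfAdjoint, star_smul, star_one]
        norm_num [Complex.ext_iff]
        rfl
      · intro z
        show 0 ≤ (((1 / 2 : ℂ) • (1 : ℂ →L[ℂ] ℂ)).reApplyInnerSelf z)
        rw [ContinuousLinearMap.reApplyInnerSelf]
        simp only [ContinuousLinearMap.smul_apply, ContinuousLinearMap.one_apply]
        rw [inner_smul_left, inner_self_eq_norm_sq_to_K]
        simp [RCLike.mul_re]
        rw [← Complex.ofReal_pow, Complex.ofReal_re]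
        positivity
    · intro e he
      have := half_of_sums A
      -- directly compute sums
      fin_cases he <;>
        · show ∑ x ∈ _, A x = 1
          rw [Finset.sum_insert (by decide), Finset.sum_singleton]
          simp only [hAdef]
          have := add_smul (1 / 2 : ℂ) (1 / 2 : ℂ) (1 : ℂ →L[ℂ] ℂ)
          rw [← this]
          norm_num
  exact part3 ℂ inferInstance A hPOR (hd ⟨ℂ⟩ A hPOR)
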